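/- arXiv:1504.00389 — 2 statements merged into one kernel-verified Lean document; each statement's English description precedes it below -/
import Mathlib

section
/- Let p be a prime and f : ℕ → ℕ. For every n ∈ ℕ: if n = p·r for some r ∈ ℕ then binom(p,n)_f ≡ f(r) (mod p), and otherwise binom(p,n)_f ≡ 0 (mod p). -/
/-- The extended binomial coefficient `binom(k,n)_f`: the sum, over all
`k`-tuples `(π₁,…,π_k)` of nonnegative integers with `π₁ + ⋯ + π_k = n`,
of the products `f(π₁)⋯f(π_k)`. It counts the `f`-weighted integer
compositions of `n` with exactly `k` parts. -/
def extBinom (f : ℕ → ℕ) (k n : ℕ) : ℕ :=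
  ∑ π ∈ Finset.Nat.antidiagonalTuple k n, ∏ i, f (π i)

open Polynomial Finset in
/-- recursion for `extBinom` -/
lemma extBinom_succ (f : ℕ → ℕ) (k n : ℕ) :
    extBinom f (k + 1) n = ∑ ab ∈ Finset.HasAntidiagonal.antidiagonal n, f ab.1 * extBinom f k ab.2 := by
  unfold extBinom
  simp_rw [Finset.mul_sum]
  rw [Finset.sum_sigma']
  refine Finset.sum_nbij'
      (i := fun π => (⟨(π 0, ∑ i, Fin.tail π i), Fin.tail π⟩ :
        (ab : ℕ × ℕ) × (Fin k → ℕ)))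
      (j := fun x => Fin.cons x.1.1 x.2) ?_ ?_ ?_ ?_ ?_
  · intro π hπ
    simp only [Finset.mem_sigma, Finset.HasAntidiagonal.mem_antidiagonal,
      Finset.Nat.mem_antidiagonalTuple] at hπ ⊢
    refine ⟨?_, trivial⟩
    rw [← hπ, Fin.sum_univ_succ]
    rfl
  · rintro ⟨⟨a, b⟩, x⟩ hx
    simp only [Finset.mem_sigma, Finset.HasAntidiagonal.mem_antidiagonal,
      Finset.Nat.mem_antidiagonalTuple] at hx ⊢
    rw [Fin.sum_cons, hx.2, hx.1]
  · intro π hπ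
    exact Fin.cons_self_tail π
  · rintro ⟨⟨a, b⟩, x⟩ hx
    simp only [Finset.mem_sigma, Finset.HasAntidiagonal.mem_antidiagonal,
      Finset.Nat.mem_antidiagonalTuple] at hx
    have h0 : (Fin.cons a x : Fin (k+1) → ℕ) 0 = a := rfl
    have ht : Fin.tail (Fin.cons a x : Fin (k+1) → ℕ) = x := rfl
    simp [h0, ht, hx.2]
  · intro π hπ
    rw [show (∏ i, f (π i)) = f (π 0) * ∏ i, f (Fin.tail π i) by
      rw [Fin.prod_univ_succ]; rfl]

open Polynomial Finset in
lemma extBinom_coeff {R : Type*} [CommSemiring R] (f : ℕ → ℕ) (N : ℕ) :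
    ∀ k n, n ≤ N → ((extBinom f k n : R)) =
      ((∑ i ∈ Finset.range (N + 1), C ((f i : R)) * X ^ i) ^ k).coeff n := by
  intro k
  induction k with
  | zero =>
    intro n hn
    cases n with
    | zero => simp [extBinom]
    | succ m => simp [extBinom, Polynomial.coeff_one, (Nat.succ_ne_zero m)]
  | succ k ih =>
    intro n hn
    rw [extBinom_succ, pow_succ']
    rw [Polynomial.coeff_mul]
    rw [Nat.cast_sum]
    refine Finset.sum_congr rfl ?_
    rintro ⟨a, b⟩ hab
    rw [Finset.HasAntidiagonal.mem_antidiagonal] at hab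
    have ha : a ≤ N := le_trans (le_trans (Nat.le.intro hab) hn) (le_refl N)
    have hb : b ≤ N := le_trans (le_trans (Nat.le.intro (by omega : b + a = n)) hn) (le_refl N)
    rw [Nat.cast_mul, ih b hb]
    congr 1
    rw [Polynomial.finset_sum_coeff]
    simp only [Polynomial.coeff_C_mul, Polynomial.coeff_X_pow]
    rw [Finset.sum_eq_single a]
    · simp
    · intro i _ hia
      simp [Ne.symm hia]
    · intro h
      exact absurd (Finset.mem_range.mpr (Nat.lt_succ_of_le ha)) h

open Polynomial in
lemma extBinom_zmod (p : ℕ) (hp : p.Prime) (f : ℕ → ℕ) (n : ℕ) :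
    ((extBinom f p n : ZMod p)) = if p ∣ n then (f (n / p) : ZMod p) else 0 := by
  haveI : Fact p.Prime := ⟨hp⟩
  set P : Polynomial (ZMod p) := ∑ i ∈ Finset.range (n + 1), C ((f i : ZMod p)) * X ^ i with hP
  have h1 : (extBinom f p n : ZMod p) = (P ^ p).coeff n :=
    extBinom_coeff f n p n (le_refl n)
  have h2 : P ^ p = expand (ZMod p) p P := by
    have := Polynomial.map_frobenius_expand p P
    rw [ZMod.frobenius_zmod, Polynomial.map_id] at this
    exact this.symm
  rw [h1, h2, Polynomial.coeff_expand hp.pos]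
  split_ifs with hd
  · have hle : n / p ≤ n := Nat.div_le_self n p
    rw [hP, Polynomial.finset_sum_coeff]
    simp only [Polynomial.coeff_C_mul, Polynomial.coeff_X_pow]
    rw [Finset.sum_eq_single (n / p)]
    · simp
    · intro i _ hia
      simp [Ne.symm hia]
    · intro h
      exact absurd (Finset.mem_range.mpr (Nat.lt_succ_of_le hle)) h
  · rfl

theorem extBinom_prime_row (p : ℕ) (hp : p.Prime) (f : ℕ → ℕ) (n : ℕ) :
    (∀ r, n = p * r → extBinom f p n ≡ f r [MOD p]) ∧
    ((¬ ∃ r, n = p * r) → extBinom f p n ≡ 0 [MOD p]) := by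
  constructor
  · intro r hr
    rw [← ZMod.natCast_eq_natCast_iff]
    rw [extBinom_zmod p hp f n, if_pos ⟨r, hr⟩, hr, Nat.mul_div_cancel_left r hp.pos]
  · intro h
    rw [← ZMod.natCast_eq_natCast_iff]
    rw [extBinom_zmod p hp f n, if_neg (fun ⟨r, hr⟩ => h ⟨r, hr⟩), Nat.cast_zero]
end

section
/- Let p be a prime, f : ℕ → ℕ, and s, r nonnegative integers such that p does not divide r. Define g : ℕ → ℕ by g(a) = binom(p, a·p)_f. Then binom(s·p, r)_f ≡ s · ∑ binom(p, i)_f · binom(s−1, (r−i)/p)_g (mod p²), where the sum is over all i with 0 ≤ i ≤ r such that p divides r − i. -/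
open Finset PowerSeries

variable {R : Type*} [CommRing R]

lemma coeff_pow_AT (φ : PowerSeries R) (k : ℕ) : ∀ n : ℕ,
    PowerSeries.coeff (R := R) n (φ ^ k) =
      ∑ t ∈ Finset.Nat.antidiagonalTuple k n, ∏ i, PowerSeries.coeff (R := R) (t i) φ := by
  induction k with
  | zero =>
    intro n
    cases n with
    | zero => simp [Finset.Nat.antidiagonalTuple_zero_zero]
    | succ n => simp [Finset.Nat.antidiagonalTuple_zero_succ, PowerSeries.coeff_one]
  | succ k ih =>
    intro n
    rw [pow_succ', PowerSeries.coeff_mul]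
    simp_rw [ih, Finset.mul_sum]
    rw [Finset.sum_sigma']
    refine Finset.sum_nbij' (fun x => Fin.cons x.1.1 x.2)
      (fun t => ⟨(t 0, ∑ i, Fin.tail t i), Fin.tail t⟩) ?_ ?_ ?_ ?_ ?_
    · rintro ⟨⟨a, b⟩, t⟩ hx
      simp only [Finset.mem_sigma, Finset.HasAntidiagonal.mem_antidiagonal,
        Finset.Nat.mem_antidiagonalTuple] at hx ⊢
      rw [Fin.sum_cons, hx.2]
      exact hx.1
    · intro t ht
      simp only [Finset.Nat.mem_antidiagonalTuple] at ht
      simp only [Finset.mem_sigma, Finset.HasAntidiagonal.mem_antidiagonal,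
        Finset.Nat.mem_antidiagonalTuple]
      refine ⟨?_, trivial⟩
      rw [← ht, Fin.sum_univ_succ]
      rfl
    · rintro ⟨⟨a, b⟩, t⟩ hx
      simp only [Finset.mem_sigma, Finset.HasAntidiagonal.mem_antidiagonal,
        Finset.Nat.mem_antidiagonalTuple] at hx
      simp only [Fin.cons_zero, Fin.tail_cons]
      congr 1
      rw [hx.2]
    · intro t ht
      exact Fin.cons_self_tail t
    · rintro ⟨⟨a, b⟩, t⟩ hx
      rw [Fin.prod_univ_succ]
      simp

lemma cast_extBinom (f : ℕ → ℕ) (k n : ℕ) :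
    ((extBinom f k n : ℕ) : R) =
      PowerSeries.coeff (R := R) n ((PowerSeries.mk fun i => (f i : R)) ^ k) := by
  rw [coeff_pow_AT, extBinom]
  push_cast
  simp [PowerSeries.coeff_mk]

lemma coeff_expandLike_pow (u : ℕ → R) {p : ℕ} (hp : 0 < p) (k : ℕ) : ∀ n : ℕ,
    PowerSeries.coeff (R := R) n ((PowerSeries.mk fun j => if p ∣ j then u (j / p) else 0) ^ k)
      = if p ∣ n then PowerSeries.coeff (R := R) (n / p) ((PowerSeries.mk u) ^ k) else 0 := by
  induction k with
  | zero =>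
    intro n
    simp only [pow_zero, PowerSeries.coeff_one]
    rcases Nat.eq_zero_or_pos n with rfl | hn
    · simp
    · have hn' : n ≠ 0 := hn.ne'
      rw [if_neg hn']
      split_ifs with h1 h2
      · exfalso
        have : p ≤ n := Nat.le_of_dvd hn h1
        have : n / p ≠ 0 := by
          have := Nat.div_pos this hp
          omega
        exact this h2
      · rfl
      · rfl
  | succ k ih =>
    intro n
    rw [pow_succ', PowerSeries.coeff_mul]
    simp_rw [ih, PowerSeries.coeff_mk]
    by_cases hn : p ∣ n
    · rw [if_pos hn, pow_succ', PowerSeries.coeff_mul]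
      simp only [PowerSeries.coeff_mk]
      have hinj : Function.Injective (fun x : ℕ × ℕ => (p * x.1, p * x.2)) := by
        intro a b h
        simpa [Prod.ext_iff, hp.ne'] using h
      have hsub : (Finset.HasAntidiagonal.antidiagonal (n / p)).map ⟨_, hinj⟩ ⊆ Finset.HasAntidiagonal.antidiagonal n := by
        rintro ⟨a, b⟩ hab
        simp only [Finset.mem_map, Finset.HasAntidiagonal.mem_antidiagonal, Function.Embedding.coeFn_mk] at hab ⊢
        obtain ⟨⟨x, y⟩, hxy, h⟩ := hab
        obtain ⟨rfl, rfl⟩ : p * x = a ∧ p * y = b := by simpa [Prod.ext_iff] using h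
        rw [← Nat.mul_add, hxy, Nat.mul_div_cancel' hn]
      have hzero : ∀ x ∈ Finset.HasAntidiagonal.antidiagonal n,
          x ∉ (Finset.HasAntidiagonal.antidiagonal (n / p)).map ⟨_, hinj⟩ →
          (if p ∣ x.1 then u (x.1 / p) else 0) *
            (if p ∣ x.2 then PowerSeries.coeff (R := R) (x.2 / p) ((PowerSeries.mk u) ^ k) else 0) = 0 := by
        rintro ⟨a, b⟩ hab hnotin
        simp only [Finset.HasAntidiagonal.mem_antidiagonal] at hab
        by_cases ha : p ∣ a
        · by_cases hb : p ∣ b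
          · exfalso
            apply hnotin
            simp only [Finset.mem_map, Finset.HasAntidiagonal.mem_antidiagonal, Function.Embedding.coeFn_mk]
            refine ⟨(a / p, b / p), ?_, by simp [Nat.mul_div_cancel' ha, Nat.mul_div_cancel' hb]⟩
            obtain ⟨x, rfl⟩ := ha
            obtain ⟨y, rfl⟩ := hb
            simp only [Nat.mul_div_cancel_left _ hp]
            show x + y = n / p
            rw [← hab, ← Nat.mul_add, Nat.mul_div_cancel_left _ hp]
          · rw [if_neg hb, mul_zero]
        · rw [if_neg ha, zero_mul]
      rw [← Finset.sum_subset hsub hzero, Finset.sum_map]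
      apply Finset.sum_congr rfl
      rintro ⟨x, y⟩ hxy
      simp only [Function.Embedding.coeFn_mk]
      rw [if_pos (dvd_mul_right p x), if_pos (dvd_mul_right p y),
        Nat.mul_div_cancel_left _ hp, Nat.mul_div_cancel_left _ hp]
    · rw [if_neg hn]
      apply Finset.sum_eq_zero
      rintro ⟨a, b⟩ hab
      simp only [Finset.HasAntidiagonal.mem_antidiagonal] at hab
      by_cases ha : p ∣ a
      · by_cases hb : p ∣ b
        · exact absurd (hab ▸ Nat.dvd_add ha hb) hn
        · rw [if_neg hb, mul_zero]
      · rw [if_neg ha, zero_mul]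

lemma prime_dvd_extBinom {p : ℕ} (hp : p.Prime) (f : ℕ → ℕ) {n : ℕ} (hn : ¬ p ∣ n) :
    p ∣ extBinom f p n := by
  haveI := Fact.mk hp
  rw [← ZMod.natCast_eq_zero_iff]
  rw [cast_extBinom (R := ZMod p)]
  set c : ℕ → ZMod p := fun i => (f i : ZMod p)
  set P : Polynomial (ZMod p) := ∑ i ∈ Finset.range (n + 1), Polynomial.monomial i (c i) with hP
  have hPc : ∀ j, j ≤ n → P.coeff j = c j := by
    intro j hj
    rw [hP, Polynomial.finset_sum_coeff]
    simp_rw [Polynomial.coeff_monomial]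
    rw [Finset.sum_ite_eq' (Finset.range (n + 1)) j c, if_pos (Finset.mem_range.2 (by omega))]
  have key : PowerSeries.coeff (R := ZMod p) n ((PowerSeries.mk c) ^ p)
      = PowerSeries.coeff (R := ZMod p) n ((P : PowerSeries (ZMod p)) ^ p) := by
    rw [coeff_pow_AT, coeff_pow_AT]
    apply Finset.sum_congr rfl
    intro t ht
    apply Finset.prod_congr rfl
    intro i _
    rw [Finset.Nat.mem_antidiagonalTuple] at ht
    have hti : t i ≤ n := ht ▸ Finset.single_le_sum (fun j _ => Nat.zero_le (t j))
      (Finset.mem_univ i)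
    rw [PowerSeries.coeff_mk, Polynomial.coeff_coe, hPc _ hti]
  rw [key, ← Polynomial.coe_pow, Polynomial.coeff_coe]
  have hfr : P ^ p = Polynomial.map (frobenius (ZMod p) p) (Polynomial.expand (ZMod p) p P) :=
    (Polynomial.map_frobenius_expand p P).symm
  rw [hfr, ZMod.frobenius_zmod, Polynomial.map_id, Polynomial.coeff_expand hp.pos,
    if_neg hn]

lemma sq_zero_add_pow {A : Type*} [CommRing A] {e : A} (he : e * e = 0) (g : A) (m : ℕ) :
    (g + e) ^ (m + 1) = g ^ (m + 1) + (m + 1 : ℕ) * (g ^ m * e) := by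
  induction m with
  | zero => push_cast; ring
  | succ m ih =>
    rw [pow_succ, ih]
    push_cast
    linear_combination (((m : A) + 1) * g ^ m) * he

theorem extBinom_babbage_nondiv (p : ℕ) (hp : p.Prime) (f : ℕ → ℕ)
    (s r : ℕ) (hr : ¬ p ∣ r) :
    extBinom f (s * p) r ≡
      s * ∑ i ∈ (Finset.range (r + 1)).filter (fun i => p ∣ (r - i)),
        extBinom f p i *
          extBinom (fun a => extBinom f p (a * p)) (s - 1) ((r - i) / p)
      [MOD p ^ 2] := by
  have hr0 : r ≠ 0 := by rintro rfl; exact hr (dvd_zero p)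
  obtain rfl | ⟨m, rfl⟩ : s = 0 ∨ ∃ m, s = m + 1 := by
    rcases s with _ | m
    · exact Or.inl rfl
    · exact Or.inr ⟨m, rfl⟩
  · obtain ⟨r', rfl⟩ : ∃ r', r = r' + 1 := ⟨r - 1, by omega⟩
    have h0 : extBinom f (0 * p) (r' + 1) = 0 := by
      rw [Nat.zero_mul]
      simp [extBinom, Finset.Nat.antidiagonalTuple_zero_succ]
    rw [h0, Nat.zero_mul]
  set g : ℕ → ℕ := fun a => extBinom f p (a * p) with hg
  rw [← ZMod.natCast_eq_natCast_iff]
  set R := ZMod (p ^ 2) with hR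
  set c : ℕ → R := fun i => (f i : R) with hc
  set F : PowerSeries R := PowerSeries.mk c with hF
  set u : ℕ → R := fun a => ((g a : ℕ) : R) with hu
  set G : PowerSeries R := PowerSeries.mk (fun j => if p ∣ j then u (j / p) else 0) with hG
  set E : PowerSeries R := F ^ p - G with hE
  have hFp : F ^ p = G + E := by rw [hE]; ring
  have hcF : ∀ k n : ℕ, PowerSeries.coeff (R := R) n (F ^ k) = ((extBinom f k n : ℕ) : R) :=
    fun k n => (cast_extBinom f k n).symm
  have hcG : ∀ j, PowerSeries.coeff (R := R) j G =
      if p ∣ j then ((extBinom f p j : ℕ) : R) else 0 := by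
    intro j
    rw [hG, PowerSeries.coeff_mk]
    split_ifs with h
    · show ((extBinom f p (j / p * p) : ℕ) : R) = _
      rw [Nat.div_mul_cancel h]
    · rfl
  have hcE : ∀ i, PowerSeries.coeff (R := R) i E =
      if p ∣ i then 0 else ((extBinom f p i : ℕ) : R) := by
    intro i
    rw [hE, map_sub, hcF, hcG]
    split_ifs with h
    · exact sub_self _
    · rw [sub_zero]
  have hE2 : E * E = 0 := by
    ext n
    rw [PowerSeries.coeff_mul, map_zero]
    apply Finset.sum_eq_zero
    rintro ⟨a, b⟩ hab
    rw [hcE, hcE]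
    by_cases ha : p ∣ a
    · rw [if_pos ha, zero_mul]
    · by_cases hb : p ∣ b
      · rw [if_pos hb, mul_zero]
      · rw [if_neg ha, if_neg hb]
        obtain ⟨x, hx⟩ := prime_dvd_extBinom hp f ha
        obtain ⟨y, hy⟩ := prime_dvd_extBinom hp f hb
        rw [hx, hy]
        rw [Nat.cast_mul, Nat.cast_mul]
        have : ((p : R)) * x * ((p : R) * y) = ((p ^ 2 : ℕ) : R) * (x * y) := by push_cast; ring
        rw [this, ZMod.natCast_self, zero_mul]
  have hGpow : ∀ k n : ℕ, PowerSeries.coeff (R := R) n (G ^ k) =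
      if p ∣ n then ((extBinom g k (n / p) : ℕ) : R) else 0 := by
    intro k n
    rw [hG, coeff_expandLike_pow u hp.pos]
    split_ifs with h
    · rw [hu]
      exact (cast_extBinom g k (n / p)).symm
    · rfl
  -- main computation
  have key : ((extBinom f ((m + 1) * p) r : ℕ) : R)
      = ((m + 1 : ℕ) : R) * PowerSeries.coeff (R := R) r (G ^ m * E) := by
    rw [← hcF ((m + 1) * p) r, mul_comm (m + 1) p, pow_mul, hFp,
      sq_zero_add_pow hE2 G m, map_add, hGpow, if_neg hr, zero_add,
      ← nsmul_eq_mul, map_nsmul, nsmul_eq_mul]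
  rw [key]
  rw [Nat.cast_mul, Nat.cast_sum]
  simp only [Nat.add_sub_cancel]
  congr 1
  rw [mul_comm (G ^ m) E, PowerSeries.coeff_mul]
  simp_rw [hcE, hGpow]
  rw [Finset.Nat.sum_antidiagonal_eq_sum_range_succ_mk, Finset.sum_filter]
  apply Finset.sum_congr rfl
  intro i hi
  rw [Finset.mem_range] at hi
  by_cases hpd : p ∣ (r - i)
  · rw [if_pos hpd, if_pos hpd]
    have hpi : ¬ p ∣ i := by
      intro hdi
      apply hr
      have : i + (r - i) = r := by omega
      exact this ▸ Nat.dvd_add hdi hpd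
    rw [if_neg hpi]
    push_cast
    ring
  · rw [if_neg hpd, if_neg hpd, mul_zero]
end
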